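/- arXiv:1112.5550 — 3 statements merged into one kernel-verified Lean document; each statement's English description precedes it below -/
import Mathlib

section
/- Let h : (0,1) → (0,∞) be a continuous function such that λ ↦ h(λ) and λ ↦ λ·h(λ) are integrable on (0,u) for every 0 < u < 1. Then the function H(u) = (∫_0^u λ h(λ) dλ) / (∫_0^u h(λ) dλ) is continuously differentiable on (0,1) with derivative H′(u) = h(u) · (∫_0^u (u−λ) h(λ) dλ) / (∫_0^u h(λ) dλ)², and H′(u) > 0 for every u ∈ (0,1); in particular H is strictly increasing on (0,1). -/
open MeasureTheory

/-- If `h : (0,1) → (0,∞)` is continuous and `h`, `λ·h(λ)` are integrable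
on `(0,u)` for every `u ∈ (0,1)`, then `H(u) = (∫_0^u λ h(λ) dλ)/(∫_0^u h(λ) dλ)` is
continuously differentiable on `(0,1)` with the positive derivative
`H′(u) = h(u) (∫_0^u (u−λ) h(λ) dλ)/(∫_0^u h(λ) dλ)²`; in particular `H` is strictly
increasing on `(0,1)`. -/
theorem ratio_of_integrals_strict_mono (h : ℝ → ℝ)
    (hcont : ContinuousOn h (Set.Ioo 0 1))
    (hpos : ∀ lam ∈ Set.Ioo (0:ℝ) 1, 0 < h lam)
    (hint : ∀ u ∈ Set.Ioo (0:ℝ) 1, IntervalIntegrable h volume 0 u)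
    (hint' : ∀ u ∈ Set.Ioo (0:ℝ) 1, IntervalIntegrable (fun lam => lam * h lam) volume 0 u) :
    (∀ u ∈ Set.Ioo (0:ℝ) 1,
        HasDerivAt (fun v => (∫ lam in (0:ℝ)..v, lam * h lam) / (∫ lam in (0:ℝ)..v, h lam))
          (h u * (∫ lam in (0:ℝ)..u, (u - lam) * h lam) / (∫ lam in (0:ℝ)..u, h lam) ^ 2) u
        ∧ 0 < h u * (∫ lam in (0:ℝ)..u, (u - lam) * h lam) / (∫ lam in (0:ℝ)..u, h lam) ^ 2)
    ∧ ContinuousOn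
        (deriv (fun v => (∫ lam in (0:ℝ)..v, lam * h lam) / (∫ lam in (0:ℝ)..v, h lam)))
        (Set.Ioo 0 1)
    ∧ StrictMonoOn (fun v => (∫ lam in (0:ℝ)..v, lam * h lam) / (∫ lam in (0:ℝ)..v, h lam))
        (Set.Ioo 0 1) := by
  have hcont' : ContinuousOn (fun lam => lam * h lam) (Set.Ioo 0 1) :=
    continuousOn_id.mul hcont
  set F : ℝ → ℝ := fun v => ∫ lam in (0:ℝ)..v, h lam with hFdef
  set G : ℝ → ℝ := fun v => ∫ lam in (0:ℝ)..v, lam * h lam with hGdef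
  have hFpos : ∀ u ∈ Set.Ioo (0:ℝ) 1, 0 < F u := fun u hu =>
    intervalIntegral.intervalIntegral_pos_of_pos_on (hint u hu)
      (fun x hx => hpos x ⟨hx.1, hx.2.trans hu.2⟩) hu.1
  have hFd : ∀ u ∈ Set.Ioo (0:ℝ) 1, HasDerivAt F (h u) u := fun u hu =>
    intervalIntegral.integral_hasDerivAt_right (hint u hu)
      (hcont.stronglyMeasurableAtFilter isOpen_Ioo u hu)
      (hcont.continuousAt (isOpen_Ioo.mem_nhds hu))
  have hGd : ∀ u ∈ Set.Ioo (0:ℝ) 1, HasDerivAt G (u * h u) u := fun u hu =>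
    intervalIntegral.integral_hasDerivAt_right (hint' u hu)
      (hcont'.stronglyMeasurableAtFilter isOpen_Ioo u hu)
      (hcont'.continuousAt (isOpen_Ioo.mem_nhds hu))
  have hfun : ∀ u : ℝ, (fun lam => (u - lam) * h lam) =
      (fun lam => u * h lam - lam * h lam) := by
    intro u; funext lam; ring
  have hinteg : ∀ u ∈ Set.Ioo (0:ℝ) 1,
      IntervalIntegrable (fun lam => (u - lam) * h lam) volume 0 u := by
    intro u hu
    rw [hfun u]
    exact ((hint u hu).const_mul u).sub (hint' u hu)
  have hsplit : ∀ u ∈ Set.Ioo (0:ℝ) 1,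
      (∫ lam in (0:ℝ)..u, (u - lam) * h lam) = u * F u - G u := by
    intro u hu
    rw [hfun u, intervalIntegral.integral_sub ((hint u hu).const_mul u) (hint' u hu),
      intervalIntegral.integral_const_mul]
  have hHd : ∀ u ∈ Set.Ioo (0:ℝ) 1,
      HasDerivAt (fun v => G v / F v)
        (h u * (∫ lam in (0:ℝ)..u, (u - lam) * h lam) / F u ^ 2) u := by
    intro u hu
    have : HasDerivAt (fun v => G v / F v) ((u * h u * F u - G u * h u) / F u ^ 2) u :=
      (hGd u hu).div (hFd u hu) (hFpos u hu).ne'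
    convert this using 1
    rw [hsplit u hu]; ring
  have hIpos : ∀ u ∈ Set.Ioo (0:ℝ) 1,
      0 < ∫ lam in (0:ℝ)..u, (u - lam) * h lam := by
    intro u hu
    refine intervalIntegral.intervalIntegral_pos_of_pos_on (hinteg u hu) ?_ hu.1
    intro x hx
    exact mul_pos (by linarith [hx.2]) (hpos x ⟨hx.1, hx.2.trans hu.2⟩)
  have hderivpos : ∀ u ∈ Set.Ioo (0:ℝ) 1,
      0 < h u * (∫ lam in (0:ℝ)..u, (u - lam) * h lam) / F u ^ 2 := fun u hu =>
    div_pos (mul_pos (hpos u hu) (hIpos u hu)) (pow_pos (hFpos u hu) 2)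
  have hderiveq : ∀ u ∈ Set.Ioo (0:ℝ) 1,
      deriv (fun v => G v / F v) u
        = h u * (u * F u - G u) / F u ^ 2 := by
    intro u hu
    rw [(hHd u hu).deriv, hsplit u hu]
  refine ⟨fun u hu => ⟨hHd u hu, hderivpos u hu⟩, ?_, ?_⟩
  · have hFc : ContinuousOn F (Set.Ioo 0 1) := fun u hu =>
      (hFd u hu).continuousAt.continuousWithinAt
    have hGc : ContinuousOn G (Set.Ioo 0 1) := fun u hu =>
      (hGd u hu).continuousAt.continuousWithinAt
    have : ContinuousOn (fun u => h u * (u * F u - G u) / F u ^ 2) (Set.Ioo 0 1) :=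
      (hcont.mul ((continuousOn_id.mul hFc).sub hGc)).div (hFc.pow 2)
        (fun u hu => pow_ne_zero 2 (hFpos u hu).ne')
    exact this.congr hderiveq
  · refine strictMonoOn_of_deriv_pos (convex_Ioo 0 1)
      (fun u hu => (hHd u hu).continuousAt.continuousWithinAt) ?_
    intro u hu
    rw [interior_Ioo] at hu
    rw [(hHd u hu).deriv]
    exact hderivpos u hu
end

section
/- Let n be a positive integer and k an integer with 0 ≤ k < n. The function u ↦ λ₂*(u) = (∫_0^u λ^{k+1}(1−λ)^{n−k} dλ) / (∫_0^u λ^k (1−λ)^{n−k} dλ) is strictly increasing on (0,1]. Consequently, for every 0 < u ≤ 1 the chain of inequalities λ₂*(u) ≤ (k+1)/(n+2) = λ₂*(1) < (k+1)/(n+1) holds, i.e. every constrained neutral Bayesian estimate is bounded above by the unconstrained neutral Bayesian estimate, which in turn is strictly smaller than the conservative Bayesian estimate. -/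
open MeasureTheory intervalIntegral

/-- The `(0,u)`-constrained neutral Bayesian estimator of the PD in the one-period
independent-defaults case with `n` borrowers and `k` observed defaults: the mean of the
posterior for the uniform prior on `(0,u)`. -/
noncomputable def neutralEstimator (n k : ℕ) (u : ℝ) : ℝ :=
  (∫ lam in (0:ℝ)..u, lam ^ (k + 1) * (1 - lam) ^ (n - k)) /
    (∫ lam in (0:ℝ)..u, lam ^ k * (1 - lam) ^ (n - k))


lemma contInt (f : ℝ → ℝ) (hf : Continuous f) (a b : ℝ) :
    IntervalIntegrable f volume a b := hf.intervalIntegrable a b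

lemma intPos (k m : ℕ) {a b : ℝ} (ha : 0 ≤ a) (hab : a < b) (hb : b ≤ 1) :
    0 < ∫ x in a..b, x ^ k * (1 - x) ^ m := by
  apply intervalIntegral_pos_of_pos_on (Continuous.intervalIntegrable (by fun_prop) _ _)
  · intro x hx
    exact mul_pos (pow_pos (ha.trans_lt hx.1) _) (pow_pos (by linarith [hx.2]) _)
  · exact hab

lemma keyIBP (k m : ℕ) :
    ((k : ℝ) + 1) * ∫ x in (0:ℝ)..1, x ^ k * (1 - x) ^ m
      = ((k : ℝ) + (m : ℝ) + 2) * ∫ x in (0:ℝ)..1, x ^ (k + 1) * (1 - x) ^ m := by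
  have hderiv : ∀ x : ℝ, HasDerivAt (fun x : ℝ => x ^ (k + 1) * (1 - x) ^ (m + 1))
      (((k : ℝ) + 1) * x ^ k * (1 - x) ^ (m + 1)
        - ((m : ℝ) + 1) * (x ^ (k + 1) * (1 - x) ^ m)) x := by
    intro x
    have h1 : HasDerivAt (fun x : ℝ => x ^ (k + 1)) (((k : ℝ) + 1) * x ^ k) x := by
      simpa using hasDerivAt_pow (k + 1) x
    have h2 : HasDerivAt (fun x : ℝ => (1 - x) ^ (m + 1))
        (-(((m : ℝ) + 1) * (1 - x) ^ m)) x := by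
      have := (hasDerivAt_pow (m + 1) (1 - x)).comp x
        ((hasDerivAt_const x (1:ℝ)).sub (hasDerivAt_id x))
      simpa [Function.comp_def] using this
    have : HasDerivAt (fun y : ℝ => y ^ (k + 1) * (1 - y) ^ (m + 1)) _ x := h1.mul h2
    convert this using 1
    push_cast
    ring
  have hint : ∫ x in (0:ℝ)..1, (((k : ℝ) + 1) * x ^ k * (1 - x) ^ (m + 1)
      - ((m : ℝ) + 1) * (x ^ (k + 1) * (1 - x) ^ m)) = 0 := by
    rw [integral_eq_sub_of_hasDerivAt (fun x _ => hderiv x) (Continuous.intervalIntegrable (by fun_prop) _ _)]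
    simp
  have hsplit : ∀ x : ℝ, ((k : ℝ) + 1) * x ^ k * (1 - x) ^ (m + 1)
      - ((m : ℝ) + 1) * (x ^ (k + 1) * (1 - x) ^ m)
      = ((k : ℝ) + 1) * (x ^ k * (1 - x) ^ m)
        - ((k : ℝ) + (m : ℝ) + 2) * (x ^ (k + 1) * (1 - x) ^ m) := by
    intro x; rw [pow_succ, pow_succ]; ring
  rw [show (∫ x in (0:ℝ)..1, (((k : ℝ) + 1) * x ^ k * (1 - x) ^ (m + 1)
      - ((m : ℝ) + 1) * (x ^ (k + 1) * (1 - x) ^ m)))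
      = ∫ x in (0:ℝ)..1, (((k : ℝ) + 1) * (x ^ k * (1 - x) ^ m)
        - ((k : ℝ) + (m : ℝ) + 2) * (x ^ (k + 1) * (1 - x) ^ m)) from
    intervalIntegral.integral_congr fun x _ => hsplit x,
    intervalIntegral.integral_sub (Continuous.intervalIntegrable (by fun_prop) _ _) (Continuous.intervalIntegrable (by fun_prop) _ _),
    intervalIntegral.integral_const_mul, intervalIntegral.integral_const_mul] at hint
  linarith

lemma ratio_lt (k m : ℕ) {a b : ℝ} (ha : 0 < a) (hab : a < b) (hb : b ≤ 1) :
    (∫ x in (0:ℝ)..a, x ^ (k + 1) * (1 - x) ^ m) / (∫ x in (0:ℝ)..a, x ^ k * (1 - x) ^ m)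
      < (∫ x in (0:ℝ)..b, x ^ (k + 1) * (1 - x) ^ m)
          / (∫ x in (0:ℝ)..b, x ^ k * (1 - x) ^ m) := by
  set Fa := ∫ x in (0:ℝ)..a, x ^ (k + 1) * (1 - x) ^ m with hFa
  set Ga := ∫ x in (0:ℝ)..a, x ^ k * (1 - x) ^ m with hGa
  set Df := ∫ x in a..b, x ^ (k + 1) * (1 - x) ^ m with hDf
  set Dg := ∫ x in a..b, x ^ k * (1 - x) ^ m with hDg
  have hGa0 : 0 < Ga := intPos k m le_rfl ha (by linarith)
  have hDg0 : 0 < Dg := intPos k m ha.le hab hb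
  have hFb : (∫ x in (0:ℝ)..b, x ^ (k + 1) * (1 - x) ^ m) = Fa + Df :=
    (intervalIntegral.integral_add_adjacent_intervals
      (Continuous.intervalIntegrable (by fun_prop) _ _)
      (Continuous.intervalIntegrable (by fun_prop) _ _)).symm
  have hGb : (∫ x in (0:ℝ)..b, x ^ k * (1 - x) ^ m) = Ga + Dg :=
    (intervalIntegral.integral_add_adjacent_intervals
      (Continuous.intervalIntegrable (by fun_prop) _ _)
      (Continuous.intervalIntegrable (by fun_prop) _ _)).symm
  have hGb0 : 0 < Ga + Dg := by linarith
  -- Fa ≤ a * Ga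
  have h1 : Fa ≤ a * Ga := by
    have : Fa ≤ ∫ x in (0:ℝ)..a, a * (x ^ k * (1 - x) ^ m) := by
      apply intervalIntegral.integral_mono_on ha.le
        (Continuous.intervalIntegrable (by fun_prop) _ _)
        (Continuous.intervalIntegrable (by fun_prop) _ _)
      intro x hx
      have hx0 : 0 ≤ x := hx.1
      have hx1 : x ≤ 1 := hx.2.trans (by linarith)
      have : x ^ (k + 1) * (1 - x) ^ m = x * (x ^ k * (1 - x) ^ m) := by
        rw [pow_succ]; ring
      rw [this]
      exact mul_le_mul_of_nonneg_right hx.2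
        (mul_nonneg (pow_nonneg hx0 _) (pow_nonneg (by linarith) _))
    rwa [intervalIntegral.integral_const_mul] at this
  -- a * Dg < Df
  have h2 : a * Dg < Df := by
    have hpos : 0 < ∫ x in a..b, (x - a) * (x ^ k * (1 - x) ^ m) := by
      apply intervalIntegral.intervalIntegral_pos_of_pos_on
        (Continuous.intervalIntegrable (by fun_prop) _ _) _ hab
      intro x hx
      exact mul_pos (by linarith [hx.1]) (mul_pos (pow_pos (ha.trans hx.1) _)
        (pow_pos (by linarith [hx.2]) _))
    have hsub : (∫ x in a..b, (x - a) * (x ^ k * (1 - x) ^ m))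
        = Df - a * Dg := by
      rw [hDf, hDg, ← intervalIntegral.integral_const_mul,
        ← intervalIntegral.integral_sub (Continuous.intervalIntegrable (by fun_prop) _ _)
          (Continuous.intervalIntegrable (by fun_prop) _ _)]
      apply intervalIntegral.integral_congr
      intro x _
      simp only [pow_succ]
      ring
    linarith [hsub ▸ hpos]
  rw [hFb, hGb, div_lt_div_iff₀ hGa0 hGb0]
  nlinarith [mul_le_mul_of_nonneg_right h1 hDg0.le, mul_lt_mul_of_pos_left h2 hGa0]


/-- The map `u ↦ λ₂*(u)` is strictly increasing on `(0,1]`; consequently,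
for every `0 < u ≤ 1`, `λ₂*(u) ≤ (k+1)/(n+2) = λ₂*(1) < (k+1)/(n+1)`: every constrained
neutral Bayesian estimate is bounded above by the unconstrained neutral estimate, which is
strictly smaller than the conservative Bayesian estimate. -/
theorem neutralEstimator_strictMono_and_bounds (n k : ℕ) (hn : 0 < n) (hk : k < n) :
    StrictMonoOn (neutralEstimator n k) (Set.Ioc 0 1)
    ∧ neutralEstimator n k 1 = (k + 1 : ℝ) / (n + 2 : ℝ)
    ∧ (∀ u ∈ Set.Ioc (0:ℝ) 1, neutralEstimator n k u ≤ (k + 1 : ℝ) / (n + 2 : ℝ))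
    ∧ (k + 1 : ℝ) / (n + 2 : ℝ) < (k + 1 : ℝ) / (n + 1 : ℝ) := by
  have hmono : StrictMonoOn (neutralEstimator n k) (Set.Ioc 0 1) := by
    intro a ha b hb hab
    exact ratio_lt k (n - k) ha.1 hab hb.2
  have hcast : ((k : ℝ) + ((n - k : ℕ) : ℝ) + 2) = (n : ℝ) + 2 := by
    rw [Nat.cast_sub hk.le]; ring
  have hG1 : 0 < ∫ x in (0:ℝ)..1, x ^ k * (1 - x) ^ (n - k) :=
    intPos k (n - k) le_rfl one_pos le_rfl
  have heval : neutralEstimator n k 1 = (k + 1 : ℝ) / (n + 2 : ℝ) := by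
    have hkey := keyIBP k (n - k)
    rw [hcast] at hkey
    unfold neutralEstimator
    rw [div_eq_div_iff hG1.ne' (by positivity)]
    linarith
  refine ⟨hmono, heval, ?_, ?_⟩
  · intro u hu
    rcases eq_or_lt_of_le hu.2 with h | h
    · rw [h, heval]
    · rw [← heval]
      exact (hmono hu ⟨one_pos, le_rfl⟩ h).le
  · apply div_lt_div_of_pos_left (by positivity) (by positivity)
    linarith
end

section
/- Let 0 < ρ < 1, let q ∈ ℝ, let λ = Φ(q), and let S, ξ₁, ξ₂ be independent standard normal random variables. Define the default events D_i = {√ρ·S + √(1−ρ)·ξ_i ≤ q} for i = 1, 2. Then the probability that both borrowers default strictly exceeds the product of the individual default probabilities: P[D₁ ∩ D₂] > λ² = P[D₁]·P[D₂], i.e. Φ₂(q, q; ρ) > Φ(q)², where Φ₂(·,·;ρ) denotes the bivariate standard normal distribution function with correlation ρ. -/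
open MeasureTheory ProbabilityTheory Real
open scoped ENNReal

/-- Standard normal density `φ`. -/
noncomputable def stdNormalPDF (s : ℝ) : ℝ := Real.exp (-s ^ 2 / 2) / Real.sqrt (2 * π)

/-- Standard normal cumulative distribution function `Φ`. -/
noncomputable def stdNormalCDF (q : ℝ) : ℝ := ∫ t in Set.Iic q, stdNormalPDF t

lemma pdf_eq : stdNormalPDF = gaussianPDFReal 0 1 := by
  ext x
  simp [stdNormalPDF, gaussianPDFReal, NNReal.coe_one, div_eq_inv_mul]

lemma pdf_pos (x : ℝ) : 0 < stdNormalPDF x := by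
  rw [pdf_eq]; exact gaussianPDFReal_pos 0 1 x one_ne_zero

lemma pdf_meas : Measurable stdNormalPDF := by
  rw [pdf_eq]; exact measurable_gaussianPDFReal 0 1

lemma pdf_integrable : Integrable stdNormalPDF := by
  rw [pdf_eq]; exact integrable_gaussianPDFReal 0 1

lemma pdf_integral : ∫ x, stdNormalPDF x = 1 := by
  rw [pdf_eq]; exact integral_gaussianPDFReal_eq_one 0 one_ne_zero

lemma cdf_mono : Monotone stdNormalCDF := fun x y hxy => by
  refine setIntegral_mono_set (pdf_integrable.integrableOn)
    (Filter.Eventually.of_forall fun t => (pdf_pos t).le)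
    (Filter.Eventually.of_forall ?_)
  exact Set.Iic_subset_Iic.2 hxy

lemma cdf_meas : Measurable stdNormalCDF := cdf_mono.measurable

lemma cdf_strictMono : StrictMono stdNormalCDF := fun x y hxy => by
  have h := intervalIntegral.intervalIntegral_pos_of_pos_on
    (f := stdNormalPDF) (a := x) (b := y)
    (pdf_integrable.intervalIntegrable)
    (fun t _ => pdf_pos t) hxy
  have h2 := intervalIntegral.integral_Iic_sub_Iic (μ := volume) (f := stdNormalPDF)
    (a := x) (b := y) pdf_integrable.integrableOn pdf_integrable.integrableOn
  rw [show stdNormalCDF x = ∫ t in Set.Iic x, stdNormalPDF t from rfl] at *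
  rw [show stdNormalCDF y = ∫ t in Set.Iic y, stdNormalPDF t from rfl] at *
  linarith

lemma cdf_nonneg (q : ℝ) : 0 ≤ stdNormalCDF q :=
  setIntegral_nonneg measurableSet_Iic fun t _ => (pdf_pos t).le

lemma cdf_le_one (q : ℝ) : stdNormalCDF q ≤ 1 := by
  rw [← pdf_integral]
  exact setIntegral_le_integral pdf_integrable
    (Filter.Eventually.of_forall fun t => (pdf_pos t).le)

lemma gaussian_Iic (q : ℝ) :
    gaussianReal 0 1 (Set.Iic q) = ENNReal.ofReal (stdNormalCDF q) := by
  rw [gaussianReal_apply_eq_integral 0 one_ne_zero, stdNormalCDF, pdf_eq]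

lemma sqrt2pi_pos : 0 < Real.sqrt (2 * π) := Real.sqrt_pos.2 (by positivity)

lemma gauss_int : ∫ x : ℝ, Real.exp (-x ^ 2 / 2) = Real.sqrt (2 * π) := by
  have : ∀ x : ℝ, Real.exp (-x ^ 2 / 2) = Real.exp (-(1/2) * x ^ 2) := by
    intro x; ring_nf
  simp_rw [this, integral_gaussian]
  rw [div_div_eq_mul_div, div_one, mul_comm]

lemma conv_lemma (a b u : ℝ) (ha : 0 < a) (hb : 0 < b) (hab : a ^ 2 + b ^ 2 = 1) :
    ∫ s, stdNormalPDF s * stdNormalPDF ((u - a * s) / b) = b * stdNormalPDF u := by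
  have h1 : ∀ s : ℝ, stdNormalPDF s * stdNormalPDF ((u - a * s) / b)
      = (stdNormalPDF u * (Real.sqrt (2 * π))⁻¹) * Real.exp (-((s - a * u) / b) ^ 2 / 2) := by
    intro s
    unfold stdNormalPDF
    rw [div_mul_div_comm]
    rw [show Real.exp (-s ^ 2 / 2) * Real.exp (-((u - a * s) / b) ^ 2 / 2)
        = Real.exp (-u ^ 2 / 2) * Real.exp (-((s - a * u) / b) ^ 2 / 2) by
      rw [← Real.exp_add, ← Real.exp_add]
      congr 1
      have hb2 : b ^ 2 = 1 - a ^ 2 := by linarith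
      have h4 : (b:ℝ) ≠ 0 := hb.ne'
      field_simp
      nlinarith [hb2, sq_nonneg s, sq_nonneg u]]
    field_simp
  simp_rw [h1]
  rw [MeasureTheory.integral_const_mul]
  have h2 : ∫ s : ℝ, Real.exp (-((s - a * u) / b) ^ 2 / 2) = b * Real.sqrt (2 * π) := by
    rw [integral_sub_right_eq_self (μ := volume) (fun s : ℝ => Real.exp (-(s / b) ^ 2 / 2)) (a * u)]
    rw [MeasureTheory.Measure.integral_comp_div (fun s : ℝ => Real.exp (-s ^ 2 / 2)) b]
    rw [gauss_int, abs_of_pos hb, smul_eq_mul]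
  rw [h2]
  field_simp

section Key
variable {a b q : ℝ}

/-- integral of an affine-composed pdf -/
lemma pdf_comp_integrable (hb : 0 < b) (c : ℝ) :
    Integrable (fun u : ℝ => stdNormalPDF ((u - c) / b)) := by
  have h1 : Integrable (fun u : ℝ => stdNormalPDF (u / b)) := by
    have := (integrable_comp_mul_left_iff stdNormalPDF (R := b⁻¹)
      (inv_ne_zero hb.ne')).2 pdf_integrable
    simpa [div_eq_inv_mul] using this
  exact h1.comp_sub_right c

lemma pdf_comp_integral (hb : 0 < b) (c : ℝ) :
    ∫ u : ℝ, stdNormalPDF ((u - c) / b) = b := by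
  rw [integral_sub_right_eq_self (μ := volume) (fun u : ℝ => stdNormalPDF (u / b)) c,
    MeasureTheory.Measure.integral_comp_div stdNormalPDF b, pdf_integral,
    abs_of_pos hb, smul_eq_mul, mul_one]

lemma cdf_affine (hb : 0 < b) (s : ℝ) :
    stdNormalCDF ((q - a * s) / b)
      = b⁻¹ * ∫ u in Set.Iic q, stdNormalPDF ((u - a * s) / b) := by
  have hbne : b ≠ 0 := hb.ne'
  -- substitute u = b * t + a * s
  have h1 : ∫ u in Set.Iic q, stdNormalPDF ((u - a * s) / b)
      = ∫ u : ℝ, (Set.Iic q).indicator (fun u => stdNormalPDF ((u - a * s) / b)) u := by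
    rw [integral_indicator measurableSet_Iic]
  have h2 : ∀ t : ℝ, (Set.Iic q).indicator (fun u => stdNormalPDF ((u - a * s) / b)) (b * t + a * s)
      = (Set.Iic ((q - a * s) / b)).indicator stdNormalPDF t := by
    intro t
    by_cases ht : t ≤ (q - a * s) / b
    · have ht' : b * t + a * s ≤ q := by
        rw [le_div_iff₀ hb] at ht; linarith [ht]
      rw [Set.indicator_of_mem (by simpa using ht'), Set.indicator_of_mem (by simpa using ht)]
      congr 1
      field_simp
      ring
    · have ht' : ¬ (b * t + a * s ≤ q) := by
        rw [not_le] at *; rw [div_lt_iff₀ hb] at ht; linarith [ht]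
      rw [Set.indicator_of_notMem (by simpa using ht'), Set.indicator_of_notMem (by simpa using ht)]
  set g : ℝ → ℝ := (Set.Iic q).indicator (fun u => stdNormalPDF ((u - a * s) / b)) with hg
  have h3 : ∫ t : ℝ, g (b * t + a * s) = |b⁻¹| • ∫ x : ℝ, g (x + a * s) :=
    MeasureTheory.Measure.integral_comp_mul_left (fun x => g (x + a * s)) b
  have h4 : ∫ x : ℝ, g (x + a * s) = ∫ u : ℝ, g u :=
    integral_add_right_eq_self (μ := volume) g (a * s)
  have h5 : ∫ t : ℝ, g (b * t + a * s) = stdNormalCDF ((q - a * s) / b) := by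
    simp_rw [h2]
    rw [integral_indicator measurableSet_Iic]
    rfl
  rw [← h5, h3, h4, ← h1, abs_of_pos (inv_pos.2 hb), smul_eq_mul]

lemma norm_pdf_comp_meas (ha : 0 < a) (hb : 0 < b) :
    Measurable (fun p : ℝ × ℝ =>
      (Set.Iic q).indicator (fun u => b⁻¹ * (stdNormalPDF p.1 * stdNormalPDF ((u - a * p.1) / b))) p.2) := by
  have : (fun p : ℝ × ℝ =>
      (Set.Iic q).indicator (fun u => b⁻¹ * (stdNormalPDF p.1 * stdNormalPDF ((u - a * p.1) / b))) p.2)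
      = Set.indicator {x : ℝ × ℝ | x.2 ≤ q}
        (fun x => b⁻¹ * (stdNormalPDF x.1 * stdNormalPDF ((x.2 - a * x.1) / b))) := by
    funext p
    by_cases hp : p.2 ≤ q <;> simp [Set.indicator, hp]
  rw [this]
  refine Measurable.indicator ?_ (measurableSet_le measurable_snd measurable_const)
  exact (measurable_const.mul ((pdf_meas.comp measurable_fst).mul
    (pdf_meas.comp (((measurable_snd.sub (measurable_fst.const_mul a)).div_const b)))))

lemma key_identity (ha : 0 < a) (hb : 0 < b) (hab : a ^ 2 + b ^ 2 = 1) :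
    ∫ s, stdNormalPDF s * stdNormalCDF ((q - a * s) / b) = stdNormalCDF q := by
  have hbne : b ≠ 0 := hb.ne'
  set f : ℝ → ℝ → ℝ := fun s u =>
    (Set.Iic q).indicator (fun u => b⁻¹ * (stdNormalPDF s * stdNormalPDF ((u - a * s) / b))) u with hf
  have hmeas : AEStronglyMeasurable (Function.uncurry f) (volume.prod volume) :=
    (norm_pdf_comp_meas ha hb).aestronglyMeasurable
  have hnonneg : ∀ s u, 0 ≤ f s u := by
    intro s u
    refine Set.indicator_nonneg (fun u _ => ?_) u
    exact mul_nonneg (inv_nonneg.2 hb.le) (mul_nonneg (pdf_pos s).le (pdf_pos _).le)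
  have hint_inner : ∀ s : ℝ, Integrable (f s) := by
    intro s
    exact (((pdf_comp_integrable hb (a * s)).const_mul (stdNormalPDF s)).const_mul b⁻¹).indicator
      measurableSet_Iic
  have hinner_le : ∀ s : ℝ, ∫ u, f s u ≤ stdNormalPDF s := by
    intro s
    have h1 : ∫ u, f s u ≤ ∫ u, b⁻¹ * (stdNormalPDF s * stdNormalPDF ((u - a * s) / b)) := by
      refine integral_mono (hint_inner s)
        (((pdf_comp_integrable hb (a * s)).const_mul (stdNormalPDF s)).const_mul b⁻¹) ?_
      intro u
      exact Set.indicator_le_self' (fun v _ => mul_nonneg (inv_nonneg.2 hb.le) (mul_nonneg (pdf_pos s).le (pdf_pos _).le)) u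
    rw [MeasureTheory.integral_const_mul, MeasureTheory.integral_const_mul,
      pdf_comp_integral hb (a * s)] at h1
    calc ∫ u, f s u ≤ b⁻¹ * (stdNormalPDF s * b) := h1
    _ = stdNormalPDF s := by field_simp
  have hint : Integrable (Function.uncurry f) (volume.prod volume) := by
    rw [MeasureTheory.integrable_prod_iff hmeas]
    constructor
    · exact Filter.Eventually.of_forall fun s => hint_inner s
    · refine Integrable.mono' pdf_integrable hmeas.norm.integral_prod_right'
        (Filter.Eventually.of_forall fun s => ?_)
      have h0 : ∀ u, ‖f s u‖ = f s u := fun u => Real.norm_of_nonneg (hnonneg s u)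
      simp_rw [Function.uncurry, h0]
      rw [Real.norm_of_nonneg (integral_nonneg (hnonneg s))]
      exact hinner_le s
  have hleft : ∀ s : ℝ, ∫ u, f s u = stdNormalPDF s * stdNormalCDF ((q - a * s) / b) := by
    intro s
    rw [hf]
    rw [integral_indicator measurableSet_Iic, MeasureTheory.integral_const_mul,
      MeasureTheory.integral_const_mul, cdf_affine hb s]
    ring
  have hright : ∀ u : ℝ, (∫ s, f s u) = (Set.Iic q).indicator stdNormalPDF u := by
    intro u
    by_cases hu : u ≤ q
    · have : ∀ s : ℝ, f s u = b⁻¹ * (stdNormalPDF s * stdNormalPDF ((u - a * s) / b)) := by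
        intro s; simp only [hf]; rw [Set.indicator_of_mem (Set.mem_Iic.mpr hu)]
      simp_rw [this]
      rw [MeasureTheory.integral_const_mul, conv_lemma a b u ha hb hab,
        Set.indicator_of_mem (Set.mem_Iic.mpr hu)]
      field_simp
    · have : ∀ s : ℝ, f s u = 0 := by
        intro s; simp only [hf]; rw [Set.indicator_of_notMem (by simpa using hu)]
      simp_rw [this]
      rw [integral_zero, Set.indicator_of_notMem (by simpa using hu)]
  calc ∫ s, stdNormalPDF s * stdNormalCDF ((q - a * s) / b)
      = ∫ s, ∫ u, f s u := by simp_rw [hleft]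
    _ = ∫ u, ∫ s, f s u := (MeasureTheory.integral_integral_swap hint)
    _ = ∫ u, (Set.Iic q).indicator stdNormalPDF u := by simp_rw [hright]
    _ = stdNormalCDF q := by rw [integral_indicator measurableSet_Iic]; rfl

end Key

section Var
variable {a b q : ℝ}

lemma F_meas : Measurable (fun s : ℝ => stdNormalCDF ((q - a * s) / b)) :=
  cdf_meas.comp (((measurable_const.sub (measurable_id.const_mul a)).div_const b))

lemma pdfF_integrable :
    Integrable (fun s => stdNormalPDF s * stdNormalCDF ((q - a * s) / b)) := by
  refine Integrable.mono' pdf_integrable (pdf_meas.mul F_meas).aestronglyMeasurable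
    (Filter.Eventually.of_forall fun s => ?_)
  rw [Real.norm_of_nonneg (mul_nonneg (pdf_pos s).le (cdf_nonneg _))]
  nlinarith [pdf_pos s, cdf_nonneg ((q - a * s) / b), cdf_le_one ((q - a * s) / b)]

lemma pdfF2_integrable :
    Integrable (fun s => stdNormalPDF s * stdNormalCDF ((q - a * s) / b) ^ 2) := by
  refine Integrable.mono' pdf_integrable (pdf_meas.mul (F_meas.pow measurable_const)).aestronglyMeasurable
    (Filter.Eventually.of_forall fun s => ?_)
  rw [Real.norm_of_nonneg (mul_nonneg (pdf_pos s).le (sq_nonneg _))]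
  refine mul_le_of_le_one_right (pdf_pos s).le ?_
  nlinarith [cdf_nonneg ((q - a * s) / b), cdf_le_one ((q - a * s) / b)]

lemma var_pos (ha : 0 < a) (hb : 0 < b) (hab : a ^ 2 + b ^ 2 = 1) :
    stdNormalCDF q ^ 2 < ∫ s, stdNormalPDF s * stdNormalCDF ((q - a * s) / b) ^ 2 := by
  set F : ℝ → ℝ := fun s => stdNormalCDF ((q - a * s) / b) with hF
  set m : ℝ := stdNormalCDF q with hm
  set h : ℝ → ℝ := fun s => stdNormalPDF s * (F s - m) ^ 2 with hh
  have hFanti : StrictAnti F := by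
    intro s t hst
    exact cdf_strictMono (by apply div_lt_div_of_pos_right ?_ hb; nlinarith)
  have hh_int : Integrable h := by
    refine Integrable.mono' (pdf_integrable.const_mul 4)
      ((pdf_meas.mul ((F_meas.sub measurable_const).pow measurable_const)).aestronglyMeasurable)
      (Filter.Eventually.of_forall fun s => ?_)
    rw [Real.norm_of_nonneg (mul_nonneg (pdf_pos s).le (sq_nonneg _))]
    have h1 : (F s - m) ^ 2 ≤ 4 := by
      have := cdf_nonneg ((q - a * s) / b); have := cdf_le_one ((q - a * s) / b)
      have := cdf_nonneg q; have := cdf_le_one q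
      rw [hF, hm]; nlinarith
    nlinarith [pdf_pos s]
  have hsplit : ∫ s, h s
      = (∫ s, stdNormalPDF s * F s ^ 2) - 2 * m * (∫ s, stdNormalPDF s * F s)
        + m ^ 2 * ∫ s, stdNormalPDF s := by
    have : ∀ s, h s = stdNormalPDF s * F s ^ 2 - 2 * m * (stdNormalPDF s * F s)
        + m ^ 2 * stdNormalPDF s := by intro s; rw [hh]; ring
    simp_rw [this]
    have hAB : Integrable (fun s => stdNormalPDF s * F s ^ 2 - 2 * m * (stdNormalPDF s * F s)) :=
      pdfF2_integrable.sub (pdfF_integrable.const_mul (2 * m))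
    have hC : Integrable (fun s => m ^ 2 * stdNormalPDF s) := pdf_integrable.const_mul (m ^ 2)
    rw [integral_add hAB hC,
      integral_sub pdfF2_integrable (pdfF_integrable.const_mul (2 * m)),
      MeasureTheory.integral_const_mul, MeasureTheory.integral_const_mul]
  have hpos : 0 < ∫ s, h s := by
    rw [integral_pos_iff_support_of_nonneg_ae
      (Filter.Eventually.of_forall fun s => mul_nonneg (pdf_pos s).le (sq_nonneg _)) hh_int]
    -- find a ray inside the support
    have hray : ∃ x : ℝ, Set.Ioi x ⊆ Function.support h := by
      by_cases hex : ∃ s₀, F s₀ = m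
      · obtain ⟨s₀, hs₀⟩ := hex
        refine ⟨s₀, fun s hs => ?_⟩
        have hne : F s ≠ m := by
          rw [← hs₀]; exact (hFanti (Set.mem_Ioi.1 hs)).ne
        simp only [Function.mem_support, hh]
        exact mul_ne_zero (pdf_pos s).ne' (pow_ne_zero 2 (sub_ne_zero.2 hne))
      · refine ⟨0, fun s _ => ?_⟩
        have hne : F s ≠ m := fun hc => hex ⟨s, hc⟩
        simp only [Function.mem_support, hh]
        exact mul_ne_zero (pdf_pos s).ne' (pow_ne_zero 2 (sub_ne_zero.2 hne))
    obtain ⟨x, hx⟩ := hray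
    calc (0 : ℝ≥0∞) < volume (Set.Ioi x) := by rw [Real.volume_Ioi]; exact ENNReal.zero_lt_top
    _ ≤ volume (Function.support h) := measure_mono hx
  have hint1 : ∫ s, stdNormalPDF s * F s = m := key_identity ha hb hab
  rw [hsplit, hint1, pdf_integral] at hpos
  show stdNormalCDF q ^ 2 < ∫ s, stdNormalPDF s * F s ^ 2
  rw [← hm]
  linarith
end Var

lemma lint_eval {g : ℝ → ℝ} (hg : Measurable g) (hgnn : ∀ s, 0 ≤ g s)
    (hint : Integrable (fun s => stdNormalPDF s * g s)) :
    ∫⁻ s, ENNReal.ofReal (g s) ∂(gaussianReal 0 1)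
      = ENNReal.ofReal (∫ s, stdNormalPDF s * g s) := by
  rw [gaussianReal_of_var_ne_zero 0 one_ne_zero,
    lintegral_withDensity_eq_lintegral_mul _ (measurable_gaussianPDF 0 1)
      hg.ennreal_ofReal]
  have h1 : ∀ s : ℝ, (gaussianPDF 0 1 * fun s => ENNReal.ofReal (g s)) s
      = ENNReal.ofReal (stdNormalPDF s * g s) := by
    intro s
    simp only [Pi.mul_apply, gaussianPDF, pdf_eq]
    rw [← ENNReal.ofReal_mul (gaussianPDFReal_nonneg 0 1 s)]
  simp_rw [h1]
  rw [← ofReal_integral_eq_lintegral_ofReal hint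
    (Filter.Eventually.of_forall fun s => mul_nonneg (pdf_pos s).le (hgnn s))]

lemma iIndepFun_congr {Ω : Type*} [MeasurableSpace Ω] {P : Measure Ω} {W W' : Fin 3 → Ω → ℝ}
    (h : ∀ i, W i =ᵐ[P] W' i)
    (hW : iIndepFun W P) :
    iIndepFun W' P := by
  rw [iIndepFun_iff_measure_inter_preimage_eq_mul] at hW ⊢
  intro S sets hsets
  have hae : ∀ᵐ ω ∂P, ∀ i, W i ω = W' i ω := by
    rw [ae_all_iff]; exact h
  have h1 : ((⋂ i ∈ S, W' i ⁻¹' sets i : Set Ω)) =ᵐ[P] (⋂ i ∈ S, W i ⁻¹' sets i : Set Ω) := by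
    filter_upwards [hae] with ω hω
    show (ω ∈ ⋂ i ∈ S, W' i ⁻¹' sets i) = (ω ∈ ⋂ i ∈ S, W i ⁻¹' sets i)
    simp only [Set.mem_iInter, Set.mem_preimage]
    refine propext (forall₂_congr fun i _ => ?_)
    rw [hω i]
  rw [measure_congr h1, hW S hsets]
  refine Finset.prod_congr rfl fun i _ => ?_
  refine measure_congr ?_
  filter_upwards [h i] with ω hω
  show (ω ∈ W i ⁻¹' sets i) = (ω ∈ W' i ⁻¹' sets i)
  simp only [Set.mem_preimage]
  rw [hω]

lemma marginal_eq {Ω : Type*} [MeasurableSpace Ω] (P : Measure Ω) [IsProbabilityMeasure P]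
    {X Y : Ω → ℝ} (hX : Measurable X) (hY : Measurable Y) (hXY : IndepFun X Y P)
    (hlX : Measure.map X P = gaussianReal 0 1) (hlY : Measure.map Y P = gaussianReal 0 1)
    {a b q : ℝ} (ha : 0 < a) (hb : 0 < b) (hab : a ^ 2 + b ^ 2 = 1) :
    P {ω | a * X ω + b * Y ω ≤ q} = ENNReal.ofReal (stdNormalCDF q) := by
  have hmap := (indepFun_iff_map_prod_eq_prod_map_map hX.aemeasurable hY.aemeasurable).1 hXY
  rw [hlX, hlY] at hmap
  have hA : MeasurableSet {p : ℝ × ℝ | a * p.1 + b * p.2 ≤ q} :=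
    measurableSet_le (by fun_prop) measurable_const
  have h0 : P {ω | a * X ω + b * Y ω ≤ q}
      = ((gaussianReal 0 1).prod (gaussianReal 0 1)) {p : ℝ × ℝ | a * p.1 + b * p.2 ≤ q} := by
    rw [← hmap, Measure.map_apply (hX.prodMk hY) hA]
    rfl
  rw [h0, Measure.prod_apply hA]
  have h1 : ∀ s : ℝ, (gaussianReal 0 1) (Prod.mk s ⁻¹' {p : ℝ × ℝ | a * p.1 + b * p.2 ≤ q})
      = ENNReal.ofReal (stdNormalCDF ((q - a * s) / b)) := by
    intro s
    have h2 : Prod.mk s ⁻¹' {p : ℝ × ℝ | a * p.1 + b * p.2 ≤ q}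
        = Set.Iic ((q - a * s) / b) := by
      ext x
      simp only [Set.mem_preimage, Set.mem_setOf_eq, Set.mem_Iic, le_div_iff₀ hb]
      constructor <;> intro <;> nlinarith
    rw [h2, gaussian_Iic]
  simp_rw [h1]
  rw [lint_eval F_meas (fun s => cdf_nonneg _) pdfF_integrable, key_identity ha hb hab]

lemma joint_eq {Ω : Type*} [MeasurableSpace Ω] (P : Measure Ω) [IsProbabilityMeasure P]
    {X : Ω → ℝ} {Y : Ω → ℝ × ℝ} (hX : Measurable X) (hY : Measurable Y)
    (hXY : IndepFun X Y P)
    (hlX : Measure.map X P = gaussianReal 0 1)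
    (hlY : Measure.map Y P = (gaussianReal 0 1).prod (gaussianReal 0 1))
    {a b q : ℝ} (ha : 0 < a) (hb : 0 < b) (hab : a ^ 2 + b ^ 2 = 1) :
    P {ω | a * X ω + b * (Y ω).1 ≤ q ∧ a * X ω + b * (Y ω).2 ≤ q}
      = ENNReal.ofReal (∫ s, stdNormalPDF s * stdNormalCDF ((q - a * s) / b) ^ 2) := by
  have hmap := (indepFun_iff_map_prod_eq_prod_map_map hX.aemeasurable hY.aemeasurable).1 hXY
  rw [hlX, hlY] at hmap
  have m1 : Measurable (fun p : ℝ × (ℝ × ℝ) => a * p.1 + b * p.2.1) := by fun_prop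
  have m2 : Measurable (fun p : ℝ × (ℝ × ℝ) => a * p.1 + b * p.2.2) := by fun_prop
  have hB : MeasurableSet {p : ℝ × (ℝ × ℝ) | a * p.1 + b * p.2.1 ≤ q ∧ a * p.1 + b * p.2.2 ≤ q} := by
    rw [Set.setOf_and]
    exact (measurableSet_le m1 measurable_const).inter (measurableSet_le m2 measurable_const)
  have h0 : P {ω | a * X ω + b * (Y ω).1 ≤ q ∧ a * X ω + b * (Y ω).2 ≤ q}
      = ((gaussianReal 0 1).prod ((gaussianReal 0 1).prod (gaussianReal 0 1)))
          {p : ℝ × (ℝ × ℝ) | a * p.1 + b * p.2.1 ≤ q ∧ a * p.1 + b * p.2.2 ≤ q} := by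
    rw [← hmap, Measure.map_apply (hX.prodMk hY) hB]
    rfl
  rw [h0, Measure.prod_apply hB]
  have h1 : ∀ s : ℝ, ((gaussianReal 0 1).prod (gaussianReal 0 1))
        (Prod.mk s ⁻¹' {p : ℝ × (ℝ × ℝ) | a * p.1 + b * p.2.1 ≤ q ∧ a * p.1 + b * p.2.2 ≤ q})
      = ENNReal.ofReal (stdNormalCDF ((q - a * s) / b) ^ 2) := by
    intro s
    have h2 : Prod.mk s ⁻¹' {p : ℝ × (ℝ × ℝ) | a * p.1 + b * p.2.1 ≤ q ∧ a * p.1 + b * p.2.2 ≤ q}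
        = (Set.Iic ((q - a * s) / b)) ×ˢ (Set.Iic ((q - a * s) / b)) := by
      ext x
      simp only [Set.mem_preimage, Set.mem_setOf_eq, Set.mem_prod, Set.mem_Iic, le_div_iff₀ hb]
      constructor <;> intro hx <;> exact ⟨by nlinarith [hx.1], by nlinarith [hx.2]⟩
    rw [h2, Measure.prod_prod, gaussian_Iic, ← ENNReal.ofReal_mul (cdf_nonneg _), sq]
  simp_rw [h1]
  rw [lint_eval (F_meas.pow measurable_const) (fun s => sq_nonneg _) pdfF2_integrable]

/-- In the one-factor Gaussian model with asset correlation `0 < ρ < 1`,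
with `S, ξ₁, ξ₂` independent standard normal (here `W 0 = S`, `W 1 = ξ₁`, `W 2 = ξ₂`) and
default events `D_i = {√ρ S + √(1−ρ) ξ_i ≤ q}`, the joint default probability strictly
exceeds the product of the individual default probabilities `λ² = Φ(q)²`. -/
theorem joint_default_probability_gt (Ω : Type*) [MeasurableSpace Ω]
    (P : Measure Ω) [IsProbabilityMeasure P]
    (W : Fin 3 → Ω → ℝ)
    (hindep : iIndepFun W P)
    (hlaw : ∀ i, Measure.map (W i) P = gaussianReal 0 1)
    (ρ q : ℝ) (hρ0 : 0 < ρ) (hρ1 : ρ < 1) :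
    (P {ω | Real.sqrt ρ * W 0 ω + Real.sqrt (1 - ρ) * W 1 ω ≤ q
          ∧ Real.sqrt ρ * W 0 ω + Real.sqrt (1 - ρ) * W 2 ω ≤ q}).toReal
      > stdNormalCDF q ^ 2
    ∧ (P {ω | Real.sqrt ρ * W 0 ω + Real.sqrt (1 - ρ) * W 1 ω ≤ q}).toReal = stdNormalCDF q
    ∧ (P {ω | Real.sqrt ρ * W 0 ω + Real.sqrt (1 - ρ) * W 2 ω ≤ q}).toReal = stdNormalCDF q := by
  set a : ℝ := Real.sqrt ρ with hadef
  set b : ℝ := Real.sqrt (1 - ρ) with hbdef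
  have ha : 0 < a := Real.sqrt_pos.2 hρ0
  have hb : 0 < b := Real.sqrt_pos.2 (by linarith)
  have hab : a ^ 2 + b ^ 2 = 1 := by
    rw [hadef, hbdef, Real.sq_sqrt hρ0.le, Real.sq_sqrt (by linarith : (0:ℝ) ≤ 1 - ρ)]
    ring
  -- measurable modifications
  have haem : ∀ i, AEMeasurable (W i) P := by
    intro i
    by_contra hc
    have h0 := Measure.map_of_not_aemeasurable hc
    rw [hlaw i] at h0
    exact (IsProbabilityMeasure.ne_zero (gaussianReal 0 1)) h0
  set W' : Fin 3 → Ω → ℝ := fun i => (haem i).mk (W i) with hW'def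
  have hWm : ∀ i, Measurable (W' i) := fun i => (haem i).measurable_mk
  have hae : ∀ i, W i =ᵐ[P] W' i := fun i => (haem i).ae_eq_mk
  have hlaw' : ∀ i, Measure.map (W' i) P = gaussianReal 0 1 := by
    intro i
    rw [← Measure.map_congr (hae i), hlaw i]
  have hindep' : iIndepFun W' P := iIndepFun_congr hae hindep
  -- marginals
  have hmarg : ∀ i : Fin 3, i ≠ 0 → P {ω | a * W 0 ω + b * W i ω ≤ q}
      = ENNReal.ofReal (stdNormalCDF q) := by
    intro i hi
    have hs : ({ω | a * W 0 ω + b * W i ω ≤ q} : Set Ω)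
        =ᵐ[P] ({ω | a * W' 0 ω + b * W' i ω ≤ q} : Set Ω) := by
      filter_upwards [hae 0, hae i] with ω h0 h1
      show (a * W 0 ω + b * W i ω ≤ q) = (a * W' 0 ω + b * W' i ω ≤ q)
      rw [h0, h1]
    rw [measure_congr hs]
    exact marginal_eq P (hWm 0) (hWm i) (hindep'.indepFun (Ne.symm hi)) (hlaw' 0) (hlaw' i)
      ha hb hab
  -- joint
  have hjoint : P {ω | a * W 0 ω + b * W 1 ω ≤ q ∧ a * W 0 ω + b * W 2 ω ≤ q}
      = ENNReal.ofReal (∫ s, stdNormalPDF s * stdNormalCDF ((q - a * s) / b) ^ 2) := by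
    have hs : ({ω | a * W 0 ω + b * W 1 ω ≤ q ∧ a * W 0 ω + b * W 2 ω ≤ q} : Set Ω)
        =ᵐ[P] ({ω | a * W' 0 ω + b * W' 1 ω ≤ q ∧ a * W' 0 ω + b * W' 2 ω ≤ q} : Set Ω) := by
      filter_upwards [hae 0, hae 1, hae 2] with ω h0 h1 h2
      show (a * W 0 ω + b * W 1 ω ≤ q ∧ a * W 0 ω + b * W 2 ω ≤ q)
        = (a * W' 0 ω + b * W' 1 ω ≤ q ∧ a * W' 0 ω + b * W' 2 ω ≤ q)
      rw [h0, h1, h2]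
    rw [measure_congr hs]
    have hYm : Measurable (fun ω => (W' 1 ω, W' 2 ω)) := (hWm 1).prodMk (hWm 2)
    have h12 : IndepFun (W' 1) (W' 2) P := hindep'.indepFun (by decide)
    have hlY : Measure.map (fun ω => (W' 1 ω, W' 2 ω)) P
        = (gaussianReal 0 1).prod (gaussianReal 0 1) := by
      rw [(indepFun_iff_map_prod_eq_prod_map_map (hWm 1).aemeasurable
        (hWm 2).aemeasurable).1 h12, hlaw' 1, hlaw' 2]
    have hXY : IndepFun (W' 0) (fun ω => (W' 1 ω, W' 2 ω)) P :=
      (hindep'.indepFun_prodMk hWm 1 2 0 (by decide) (by decide)).symm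
    exact joint_eq P (hWm 0) hYm hXY (hlaw' 0) hlY ha hb hab
  have hJpos := var_pos (q := q) ha hb hab
  refine ⟨?_, ?_, ?_⟩
  · rw [hjoint, ENNReal.toReal_ofReal (le_trans (sq_nonneg _) hJpos.le)]
    exact hJpos
  · rw [hmarg 1 (by decide), ENNReal.toReal_ofReal (cdf_nonneg q)]
  · rw [hmarg 2 (by decide), ENNReal.toReal_ofReal (cdf_nonneg q)]
end
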